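/- arXiv:2602.23591 — 2 statements merged into one kernel-verified Lean document; each statement's English description precedes it below -/
import Mathlib

section
/- There exists a constant C > 0, independent of n, m, A, B, such that for all natural numbers n, m and all nonnegative reals A, B and all s ≥ 1: (A + (n+m)^s·B)^(n+m) ≤ C^(n+m)·(A + n^s·B)^n·(A + m^s·B)^m. -/
open Real

private lemma key_aux (s : ℝ) (hs : 1 ≤ s) (n m : ℕ) (hmn : m ≤ n) (A B : ℝ)
    (hA : 0 ≤ A) (hB : 0 ≤ B) :
    (A + ((n + m : ℕ) : ℝ) ^ s * B) ^ (n + m) ≤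
      ((2 * Real.exp 1) ^ s) ^ (n + m) * (A + (n : ℝ) ^ s * B) ^ n *
        (A + (m : ℝ) ^ s * B) ^ m := by
  have hs0 : (0:ℝ) < s := lt_of_lt_of_le one_pos hs
  have hns : (0:ℝ) ≤ (n : ℝ) ^ s := Real.rpow_nonneg (Nat.cast_nonneg n) s
  have hms : (0:ℝ) ≤ (m : ℝ) ^ s := Real.rpow_nonneg (Nat.cast_nonneg m) s
  have hu : 0 ≤ A + (n : ℝ) ^ s * B := by positivity
  have hv : 0 ≤ A + (m : ℝ) ^ s * B := by positivity
  have h2s : (1:ℝ) ≤ 2 ^ s := Real.one_le_rpow (by norm_num) hs0.le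
  -- Step 1 : A + (n+m)^s B ≤ 2^s (A + n^s B)
  have h1 : A + ((n + m : ℕ) : ℝ) ^ s * B ≤ 2 ^ s * (A + (n : ℝ) ^ s * B) := by
    have hle : ((n + m : ℕ) : ℝ) ^ s ≤ (2 * (n:ℝ)) ^ s := by
      apply Real.rpow_le_rpow (by positivity) _ hs0.le
      push_cast; have : (m:ℝ) ≤ (n:ℝ) := Nat.cast_le.mpr hmn
      linarith
    have h2n : ((2 : ℝ) * n) ^ s = 2 ^ s * (n:ℝ) ^ s :=
      Real.mul_rpow (by norm_num) (Nat.cast_nonneg n)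
    have hA' : A ≤ 2 ^ s * A := le_mul_of_one_le_left hA h2s
    have hB' : ((n + m : ℕ) : ℝ) ^ s * B ≤ 2 ^ s * ((n:ℝ) ^ s * B) := by
      rw [h2n] at hle
      calc ((n + m : ℕ) : ℝ) ^ s * B ≤ 2 ^ s * (n:ℝ) ^ s * B :=
            mul_le_mul_of_nonneg_right hle hB
        _ = 2 ^ s * ((n:ℝ) ^ s * B) := by ring
    calc A + ((n + m : ℕ) : ℝ) ^ s * B ≤ 2 ^ s * A + 2 ^ s * ((n:ℝ) ^ s * B) :=
          add_le_add hA' hB'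
      _ = 2 ^ s * (A + (n : ℝ) ^ s * B) := by ring
  -- Step 2 : (A + n^s B)^m ≤ (exp s)^(n+m) * (A + m^s B)^m
  have h2 : (A + (n : ℝ) ^ s * B) ^ m ≤
      (Real.exp s) ^ (n + m) * (A + (m : ℝ) ^ s * B) ^ m := by
    rcases Nat.eq_zero_or_pos m with hm0 | hm
    · subst hm0
      simp only [pow_zero, Nat.add_zero, mul_one]
      exact one_le_pow₀ (Real.one_le_exp hs0.le)
    · have hm1 : (1:ℝ) ≤ (m:ℝ) := by exact_mod_cast hm
      have hm0' : (0:ℝ) < (m:ℝ) := by linarith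
      have hnm1 : (1:ℝ) ≤ (n:ℝ) / (m:ℝ) := by
        rw [le_div_iff₀ hm0']
        simpa using (Nat.cast_le.mpr hmn : (m:ℝ) ≤ (n:ℝ))
      set r : ℝ := ((n:ℝ) / (m:ℝ)) ^ s with hr
      have hr1 : (1:ℝ) ≤ r := Real.one_le_rpow hnm1 hs0.le
      have hrm : r * (m:ℝ) ^ s = (n:ℝ) ^ s := by
        rw [hr, ← Real.mul_rpow (by positivity) (Nat.cast_nonneg m),
          div_mul_cancel₀]
        exact ne_of_gt hm0'
      have hpt : A + (n : ℝ) ^ s * B ≤ r * (A + (m : ℝ) ^ s * B) := by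
        have : r * (A + (m : ℝ) ^ s * B) = r * A + (n:ℝ) ^ s * B := by
          rw [mul_add, ← mul_assoc, hrm]
        rw [this]
        have : A ≤ r * A := le_mul_of_one_le_left hA hr1
        linarith
      have hpow : (A + (n : ℝ) ^ s * B) ^ m ≤ r ^ m * (A + (m : ℝ) ^ s * B) ^ m := by
        calc (A + (n : ℝ) ^ s * B) ^ m ≤ (r * (A + (m : ℝ) ^ s * B)) ^ m :=
              pow_le_pow_left₀ hu hpt m
          _ = r ^ m * (A + (m : ℝ) ^ s * B) ^ m := mul_pow _ _ _
      have hrbound : r ^ m ≤ (Real.exp s) ^ (n + m) := by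
        have hb : (n:ℝ) / (m:ℝ) ≤ Real.exp ((n:ℝ) / (m:ℝ)) :=
          le_trans (by linarith [Real.add_one_le_exp ((n:ℝ)/(m:ℝ))]) le_rfl
        have h1' : r ≤ Real.exp (s * ((n:ℝ) / (m:ℝ))) := by
          calc r ≤ (Real.exp ((n:ℝ) / (m:ℝ))) ^ s :=
                Real.rpow_le_rpow (by positivity) hb hs0.le
            _ = Real.exp (s * ((n:ℝ) / (m:ℝ))) := by
                rw [← Real.exp_mul, mul_comm]
        have h2' : r ^ m ≤ Real.exp (s * ((n:ℝ) / (m:ℝ))) ^ m :=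
          pow_le_pow_left₀ (by positivity) h1' m
        have h3' : Real.exp (s * ((n:ℝ) / (m:ℝ))) ^ m = Real.exp (s * (n:ℝ)) := by
          rw [← Real.exp_nat_mul]
          congr 1
          field_simp
        have h4' : Real.exp (s * (n:ℝ)) ≤ (Real.exp s) ^ (n + m) := by
          rw [← Real.exp_nat_mul]
          apply Real.exp_le_exp.mpr
          push_cast
          nlinarith [Nat.cast_nonneg m (α := ℝ)]
        calc r ^ m ≤ Real.exp (s * ((n:ℝ) / (m:ℝ))) ^ m := h2'
          _ = Real.exp (s * (n:ℝ)) := h3'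
          _ ≤ (Real.exp s) ^ (n + m) := h4'
      calc (A + (n : ℝ) ^ s * B) ^ m ≤ r ^ m * (A + (m : ℝ) ^ s * B) ^ m := hpow
        _ ≤ (Real.exp s) ^ (n + m) * (A + (m : ℝ) ^ s * B) ^ m := by
            apply mul_le_mul_of_nonneg_right hrbound (by positivity)
  -- combine
  have hC : ((2 * Real.exp 1) ^ s : ℝ) = 2 ^ s * Real.exp s := by
    rw [Real.mul_rpow (by norm_num) (Real.exp_pos 1).le, ← Real.exp_one_rpow s]
  calc (A + ((n + m : ℕ) : ℝ) ^ s * B) ^ (n + m)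
      ≤ (2 ^ s * (A + (n : ℝ) ^ s * B)) ^ (n + m) :=
        pow_le_pow_left₀ (by positivity) h1 _
    _ = (2 ^ s) ^ (n + m) * ((A + (n : ℝ) ^ s * B) ^ n * (A + (n : ℝ) ^ s * B) ^ m) := by
        rw [mul_pow, pow_add, pow_add]
    _ ≤ (2 ^ s) ^ (n + m) * ((A + (n : ℝ) ^ s * B) ^ n *
          ((Real.exp s) ^ (n + m) * (A + (m : ℝ) ^ s * B) ^ m)) := by
        apply mul_le_mul_of_nonneg_left _ (by positivity)
        exact mul_le_mul_of_nonneg_left h2 (by positivity)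
    _ = ((2 * Real.exp 1) ^ s) ^ (n + m) * (A + (n : ℝ) ^ s * B) ^ n *
          (A + (m : ℝ) ^ s * B) ^ m := by
        rw [hC, mul_pow]; ring

/-- For each fixed `s ≥ 1` there is a constant `C > 0`, independent of `n, m, A, B`,
such that `(A + (n+m)^s·B)^(n+m) ≤ C^(n+m)·(A + n^s·B)^n·(A + m^s·B)^m`. -/
theorem stmt_0 (s : ℝ) (hs : 1 ≤ s) :
    ∃ C : ℝ, 0 < C ∧ ∀ (n m : ℕ) (A B : ℝ), 0 ≤ A → 0 ≤ B →
      (A + ((n + m : ℕ) : ℝ) ^ s * B) ^ (n + m) ≤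
        C ^ (n + m) * (A + (n : ℝ) ^ s * B) ^ n * (A + (m : ℝ) ^ s * B) ^ m := by
  refine ⟨(2 * Real.exp 1) ^ s, Real.rpow_pos_of_pos (by positivity) s, ?_⟩
  intro n m A B hA hB
  rcases le_total m n with hmn | hnm
  · exact key_aux s hs n m hmn A B hA hB
  · have := key_aux s hs m n hnm A B hA hB
    rw [Nat.add_comm m n] at this
    calc (A + ((n + m : ℕ) : ℝ) ^ s * B) ^ (n + m)
        ≤ ((2 * Real.exp 1) ^ s) ^ (n + m) * (A + (m : ℝ) ^ s * B) ^ m *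
            (A + (n : ℝ) ^ s * B) ^ n := this
      _ = ((2 * Real.exp 1) ^ s) ^ (n + m) * (A + (n : ℝ) ^ s * B) ^ n *
            (A + (m : ℝ) ^ s * B) ^ m := by ring
end

section
/- Let μ : ℝ²ⁿ → ℂ be a smooth symbol with an associated two-sided inverse construction: suppose (1−μ)#(1+k) = (1+k)#(1−μ) = 1 in a symbol algebra, where # is an associative bilinear product, and suppose for a family of multiplicative weights (w_α)_{α ∈ ℕ^{2n}} with w_α·w_β ≲ w_{α+β} one has ∂_X^α μ ∈ S(w_α) for |α| ≤ N, where S(w) are classes closed under # with S(w₁)#S(w₂) ⊆ S(w₁w₂) and under differentiation via Leibniz: ∂_X^β(a#b) = ∑ C (∂^{β'}a)#(∂^{β''}b). Then ∂_X^α k ∈ S(w_α) for all |α| ≤ N. -/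
/-- Iterated application of the derivations `D` along the multi-index
(list of directions) `L`. -/
def Dpow {R : Type*} [Ring R] {d : ℕ} (D : Fin d → R → R) : List (Fin d) → R → R
  | [], r => r
  | i :: L, r => D i (Dpow D L r)

/-- "Proper" splittings of a multi-index into two parts, the first nonempty. -/
def splits {d : ℕ} : List (Fin d) → List (List (Fin d) × List (Fin d))
  | [] => []
  | i :: L => ([i], L) ::
      ((splits L).map (fun p => (i :: p.1, p.2)) ++ (splits L).map (fun p => (p.1, i :: p.2)))

lemma splits_mem {d : ℕ} : ∀ (L : List (Fin d)) (p : List (Fin d) × List (Fin d)),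
    p ∈ splits L → p.1 ≠ [] ∧ (p.1 ++ p.2).Perm L := by
  intro L
  induction L with
  | nil => intro p hp; simp [splits] at hp
  | cons i L ih =>
    intro p hp
    simp only [splits, List.mem_cons, List.mem_append, List.mem_map] at hp
    rcases hp with rfl | ⟨q, hq, rfl⟩ | ⟨q, hq, rfl⟩
    · exact ⟨by simp, by simp⟩
    · obtain ⟨h1, h2⟩ := ih q hq
      exact ⟨by simp, by simpa using h2.cons i⟩
    · obtain ⟨h1, h2⟩ := ih q hq
      refine ⟨h1, ?_⟩
      exact List.perm_middle.trans (h2.cons i)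

section
variable {R : Type*} [Ring R] {d : ℕ} (D : Fin d → R → R)
  (hadd : ∀ i (a b : R), D i (a + b) = D i a + D i b)
  (hder : ∀ i (a b : R), D i (a * b) = D i a * b + a * D i b)

include hadd in
lemma D_zero (i : Fin d) : D i 0 = 0 := by
  have h := hadd i 0 0
  rw [add_zero] at h
  exact (left_eq_add.mp h)

include hadd hder in
lemma D_one (i : Fin d) : D i 1 = 0 := by
  have h := hder i 1 1
  rw [mul_one, one_mul, mul_one] at h
  exact (left_eq_add.mp h)

include hadd in
lemma Dpow_add : ∀ (L : List (Fin d)) (a b : R),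
    Dpow D L (a + b) = Dpow D L a + Dpow D L b := by
  intro L
  induction L with
  | nil => intro a b; simp [Dpow]
  | cons i L ih => intro a b; simp [Dpow, ih, hadd]

include hadd hder in
lemma Dpow_one : ∀ (L : List (Fin d)), L ≠ [] → Dpow D L (1 : R) = 0 := by
  intro L
  induction L with
  | nil => intro h; exact absurd rfl h
  | cons i L ih =>
    intro _
    rcases eq_or_ne L [] with rfl | hL
    · simp [Dpow, D_one D hadd hder]
    · simp [Dpow, ih hL, D_zero D hadd]

include hadd in
lemma D_sum (i : Fin d) : ∀ (l : List R), D i l.sum = (l.map (D i)).sum := by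
  intro l
  induction l with
  | nil => simp [D_zero D hadd]
  | cons a l ih => simp [hadd, ih]

include hadd hder in
lemma Dpow_mul (a b : R) : ∀ (L : List (Fin d)),
    Dpow D L (a * b) = a * Dpow D L b
      + ((splits L).map (fun p => Dpow D p.1 a * Dpow D p.2 b)).sum := by
  intro L
  induction L with
  | nil => simp [Dpow, splits]
  | cons i L ih =>
    show D i (Dpow D L (a * b)) = _
    rw [ih, hadd, hder, D_sum D hadd, List.map_map]
    have hmap : (D i ∘ fun p : List (Fin d) × List (Fin d) => Dpow D p.1 a * Dpow D p.2 b)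
          = fun p => Dpow D (i :: p.1) a * Dpow D p.2 b + Dpow D p.1 a * Dpow D (i :: p.2) b := by
      funext p
      show D i (Dpow D p.1 a * Dpow D p.2 b) = _
      rw [hder]; rfl
    rw [hmap, List.sum_map_add]
    simp only [splits, List.map_cons, List.map_append, List.sum_cons, List.sum_append,
      List.map_map, Function.comp]
    simp only [Function.comp_def, Dpow]
    abel

end

/-- Abstract form of the inverse-symbol lemma: in a (noncommutative) ring with
derivations `D i`, if `(1−μ)(1+k) = (1+k)(1−μ) = 1`, the classes `S α` (indexed by
multi-indices, invariant under permutation of the index) satisfy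
`S α · S β ⊆ S (α + β)`, multiplication by `1 + k` preserves each `S α`, and
`D^α μ ∈ S α` for `|α| ≤ N`, then `D^α k ∈ S α` for `|α| ≤ N`. -/
theorem stmt_8 {R : Type*} [Ring R] {d : ℕ} (D : Fin d → R → R)
    (hadd : ∀ i (a b : R), D i (a + b) = D i a + D i b)
    (hder : ∀ i (a b : R), D i (a * b) = D i a * b + a * D i b)
    (S : List (Fin d) → AddSubgroup R)
    (hperm : ∀ L₁ L₂ : List (Fin d), L₁.Perm L₂ → S L₁ = S L₂)
    (hmul : ∀ (L₁ L₂ : List (Fin d)) (a b : R), a ∈ S L₁ → b ∈ S L₂ →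
      a * b ∈ S (L₁ ++ L₂))
    (μ k : R) (hinv₁ : (1 - μ) * (1 + k) = 1) (hinv₂ : (1 + k) * (1 - μ) = 1)
    (hk : ∀ (L : List (Fin d)) (a : R), a ∈ S L → (1 + k) * a ∈ S L ∧ a * (1 + k) ∈ S L)
    (N : ℕ) (hμ : ∀ L : List (Fin d), L.length ≤ N → Dpow D L μ ∈ S L) :
    ∀ L : List (Fin d), L.length ≤ N → Dpow D L k ∈ S L := by
  have hkeq : k = μ * (1 + k) := by
    have h := hinv₁
    rw [sub_mul, one_mul, sub_eq_iff_eq_add] at h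
    exact add_left_cancel h
  have key : ∀ n (L : List (Fin d)), L.length = n → L.length ≤ N → Dpow D L k ∈ S L := by
    intro n
    induction n using Nat.strong_induction_on with
    | _ n ih =>
      intro L hLn hLN
      rcases eq_or_ne L [] with rfl | hL
      · show k ∈ S []
        rw [hkeq]
        exact (hk [] μ (hμ [] (by simpa using hLN))).2
      · -- the Leibniz expansion
        have hmain := Dpow_mul D hadd hder μ (1 + k) L
        rw [← hkeq, Dpow_add D hadd, Dpow_one D hadd hder L hL, zero_add] at hmain
        set Ssum := ((splits L).map (fun p => Dpow D p.1 μ * Dpow D p.2 (1 + k))).sum with hSdef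
        have hS : Ssum ∈ S L := by
          apply AddSubgroup.list_sum_mem
          intro x hx
          rw [List.mem_map] at hx
          obtain ⟨p, hp, rfl⟩ := hx
          obtain ⟨hp1, hp2⟩ := splits_mem L p hp
          have hlen : p.1.length + p.2.length = L.length := by
            simpa using hp2.length_eq
          have hμmem : Dpow D p.1 μ ∈ S p.1 :=
            hμ p.1 (le_trans (by omega) hLN)
          rcases eq_or_ne p.2 [] with h2 | h2
          · have : Dpow D p.2 (1 + k) = 1 + k := by rw [h2]; rfl
            rw [this]
            have := (hk p.1 _ hμmem).2
            rwa [hperm p.1 L (by simpa [h2] using hp2)] at this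
          · have h1 : Dpow D p.2 (1 + k) = Dpow D p.2 k := by
              rw [Dpow_add D hadd, Dpow_one D hadd hder p.2 h2, zero_add]
            rw [h1]
            have hlt : p.2.length < n := by
              have : 1 ≤ p.1.length := List.length_pos_iff.mpr hp1
              omega
            have hkmem : Dpow D p.2 k ∈ S p.2 :=
              ih p.2.length hlt p.2 rfl (by omega)
            have := hmul p.1 p.2 _ _ hμmem hkmem
            rwa [hperm (p.1 ++ p.2) L hp2] at this
        have h2 : (1 - μ) * Dpow D L k = Ssum := by
          rw [sub_mul, one_mul]
          nth_rewrite 1 [hmain]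
          abel
        have h3 : Dpow D L k = (1 + k) * ((1 - μ) * Dpow D L k) := by
          rw [← mul_assoc, hinv₂, one_mul]
        rw [h3, h2]
        exact (hk L _ hS).1
  intro L hL
  exact key L.length L rfl hL
end
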